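/- Let p > 1 be real. Then for all real t with 0 ≤ t ≤ 1 and all complex numbers a, one has |a - t|^p ≥ (1 - t)^{p-1} (|a|^p - t). -/

import Mathlib

open Real

lemma key_ineq (p : ℝ) (hp : 1 < p) (t r : ℝ) (ht0 : 0 ≤ t) (ht1 : t < 1) (hrt : t ≤ r) :
    (1 - t) ^ (p - 1) * (r ^ p - t) ≤ (r - t) ^ p := by
  have h1t : (0:ℝ) < 1 - t := by linarith
  set u : ℝ := (r - t) / (1 - t) with hu
  have hu0 : 0 ≤ u := div_nonneg (by linarith) h1t.le
  have hmul : (1 - t) * u = r - t := by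
    rw [hu, mul_div_assoc']; exact mul_div_cancel_left₀ (r - t) h1t.ne'
  have hc := (convexOn_rpow hp.le).2 (Set.mem_Ici.2 hu0) (Set.mem_Ici.2 (zero_le_one))
    h1t.le ht0 (by ring)
  simp only [smul_eq_mul, Real.one_rpow] at hc
  rw [hmul] at hc
  have hc' : r ^ p - t ≤ (1 - t) * u ^ p := by
    have : (r - t + t * 1) = r := by ring
    rw [this] at hc
    linarith
  have step : (1 - t) ^ (p - 1) * (r ^ p - t) ≤ (1 - t) ^ (p - 1) * ((1 - t) * u ^ p) :=
    mul_le_mul_of_nonneg_left hc' (rpow_nonneg h1t.le _)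
  refine step.trans (le_of_eq ?_)
  have : (1 - t) ^ (p - 1) * ((1 - t) * u ^ p) = ((1 - t) * u) ^ p := by
    rw [Real.mul_rpow h1t.le hu0]
    have h2 : (1 - t) ^ (p - 1) * (1 - t) = (1 - t) ^ p := by
      nth_rewrite 2 [← Real.rpow_one (1 - t)]
      rw [← Real.rpow_add h1t]
      norm_num
    rw [← h2]; ring
  rw [this, hmul]

theorem stmt_0 (p : ℝ) (hp : 1 < p) (t : ℝ) (ht0 : 0 ≤ t) (ht1 : t ≤ 1) (a : ℂ) :
    (1 - t) ^ (p - 1) * (‖a‖ ^ p - t) ≤ ‖a - (t : ℂ)‖ ^ p := by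
  set r := ‖a‖ with hr
  have hr0 : 0 ≤ r := norm_nonneg a
  have hRHS : (0:ℝ) ≤ ‖a - (t : ℂ)‖ ^ p := rpow_nonneg (norm_nonneg _) p
  rcases eq_or_lt_of_le ht1 with ht1' | ht1'
  · -- t = 1
    subst ht1'
    simp only [sub_self, Real.zero_rpow (by linarith : p - 1 ≠ 0), zero_mul]
    exact hRHS
  by_cases hcase : r ^ p ≤ t
  · have h1 : (1 - t) ^ (p - 1) * (r ^ p - t) ≤ 0 :=
      mul_nonpos_of_nonneg_of_nonpos (rpow_nonneg (by linarith) _) (by linarith)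
    linarith
  push_neg at hcase
  have hrt : t ≤ r := by
    by_contra h
    push_neg at h
    have hle : r ^ p ≤ t := by
      rcases eq_or_lt_of_le hr0 with h0 | h0
      · rw [← h0, Real.zero_rpow (by linarith : p ≠ 0)]; exact ht0
      · calc r ^ p ≤ r ^ (1:ℝ) :=
              Real.rpow_le_rpow_of_exponent_ge h0 (by linarith) hp.le
          _ = r := Real.rpow_one r
          _ ≤ t := h.le
    linarith
  have htri : r - t ≤ ‖a - (t : ℂ)‖ := by
    have h1 : r ≤ ‖a - (t : ℂ)‖ + t := by
      calc r = ‖(a - (t : ℂ)) + (t : ℂ)‖ := by ring_nf; exact hr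
        _ ≤ ‖a - (t : ℂ)‖ + ‖(t : ℂ)‖ := norm_add_le _ _
        _ = ‖a - (t : ℂ)‖ + t := by rw [Complex.norm_of_nonneg ht0]
    linarith
  calc (1 - t) ^ (p - 1) * (r ^ p - t) ≤ (r - t) ^ p :=
        key_ineq p hp t r ht0 ht1' hrt
    _ ≤ ‖a - (t : ℂ)‖ ^ p :=
        Real.rpow_le_rpow (by linarith) htri (by linarith)
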